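/- In the commuting-observable quantum setting, let s¹, s² be sign sequences pairable at index T, let B = Σ_{j=1,2} (A_T + s^j_T B_T) · ∏_{i≠T} O_i(s^j_i), and suppose a unit vector ψ saturates the quantum bound: ⟨ψ, B ψ⟩ = 2√2. Then both saturation relations hold: (1/√2)(A_T + s¹_T B_T) · ∏_{i≠T} O_i(s¹_i) ψ = ψ and (1/√2)(A_T + s²_T B_T) · ∏_{i≠T} O_i(s²_i) ψ = ψ. -/

import Mathlib

/-!
STATEMENT 10: if a unit vector saturates the quantum bound `2√2` of the pair
Bell operator, then both saturation relations
`(1/√2)(A_T + s^j_T B_T) ∏_{i≠T} O_i(s^j_i) ψ = ψ` hold.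
-/

open scoped InnerProductSpace

noncomputable section

variable {N : ℕ} {H : Type} [NormedAddCommGroup H] [InnerProductSpace ℂ H]

/-- The observable associated to the symbol `k`: `O_i(0) = I`, `O_i(+1) = A_i`,
`O_i(-1) = B_i`. -/
def obs (A B : Fin N → H →ₗ[ℂ] H) (i : Fin N) (k : ℤ) : H →ₗ[ℂ] H :=
  if k = 1 then A i else if k = -1 then B i else 1

/-- Product of commuting operators over all parties `i ≠ T`. -/
def prodExcept (T : Fin N) (f : Fin N → (H →ₗ[ℂ] H)) : H →ₗ[ℂ] H :=
  (((List.finRange N).filter (fun i => i ≠ T)).map f).prod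

/-- The pair Bell operator built from two pairable sign sequences. -/
def pairBell (A B : Fin N → H →ₗ[ℂ] H) (s1 s2 : Fin N → ℤ) (T : Fin N) :
    H →ₗ[ℂ] H :=
  (A T + s1 T • B T) * prodExcept T (fun i => obs A B i (s1 i))
    + (A T + s2 T • B T) * prodExcept T (fun i => obs A B i (s2 i))


-- auxiliary lemmas

lemma aux_one_symm : (1 : H →ₗ[ℂ] H).IsSymmetric := fun u v => by
  simp [Module.End.one_apply]

lemma aux_neg_symm {P : H →ₗ[ℂ] H} (h : P.IsSymmetric) : (-P).IsSymmetric := fun u v => by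
  simp only [LinearMap.neg_apply, inner_neg_left, inner_neg_right, h u v]

lemma aux_mul_symm {P Q : H →ₗ[ℂ] H} (hP : P.IsSymmetric) (hQ : Q.IsSymmetric)
    (hc : Commute P Q) : (P * Q).IsSymmetric := by
  intro u v
  rw [Module.End.mul_apply, hP, hQ, ← Module.End.mul_apply, ← hc.eq, Module.End.mul_apply]

lemma aux_list_prod_sq {M : Type*} [Monoid M] :
    ∀ (l : List M), (∀ x ∈ l, x * x = 1) → l.Pairwise Commute → l.prod * l.prod = 1
  | [], _, _ => by simp
  | x :: l, h, hc => by
    obtain ⟨hhead, htail⟩ := List.pairwise_cons.mp hc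
    have hcl : Commute x l.prod := Commute.list_prod_right l x hhead
    have ih := aux_list_prod_sq l (fun y hy => h y (List.mem_cons_of_mem _ hy)) htail
    have hx := h x (List.mem_cons_self)
    rw [List.prod_cons, mul_assoc, ← mul_assoc l.prod x, ← hcl.eq, mul_assoc,
      ih, mul_one]
    exact hx

lemma aux_list_prod_symm :
    ∀ (l : List (H →ₗ[ℂ] H)), (∀ x ∈ l, x.IsSymmetric) → l.Pairwise Commute →
      l.prod.IsSymmetric
  | [], _, _ => by simpa using aux_one_symm
  | x :: l, h, hc => by
    obtain ⟨hhead, htail⟩ := List.pairwise_cons.mp hc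
    have hcl : Commute x l.prod := Commute.list_prod_right l x hhead
    have ih := aux_list_prod_symm l (fun y hy => h y (List.mem_cons_of_mem _ hy)) htail
    rw [List.prod_cons]
    exact aux_mul_symm (h x (List.mem_cons_self)) ih hcl

lemma aux_obs_symm (A B : Fin N → H →ₗ[ℂ] H)
    (hAsa : ∀ i, (A i).IsSymmetric) (hBsa : ∀ i, (B i).IsSymmetric) (i : Fin N) (k : ℤ) :
    (obs A B i k).IsSymmetric := by
  unfold obs; split_ifs
  · exact hAsa i
  · exact hBsa i
  · exact aux_one_symm

lemma aux_obs_sq (A B : Fin N → H →ₗ[ℂ] H)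
    (hA2 : ∀ i, A i * A i = 1) (hB2 : ∀ i, B i * B i = 1) (i : Fin N) (k : ℤ) :
    obs A B i k * obs A B i k = 1 := by
  unfold obs; split_ifs
  · exact hA2 i
  · exact hB2 i
  · exact mul_one 1

lemma aux_obs_commute (A B : Fin N → H →ₗ[ℂ] H)
    (hAA : ∀ i j, i ≠ j → Commute (A i) (A j))
    (hBB : ∀ i j, i ≠ j → Commute (B i) (B j))
    (hAB : ∀ i j, i ≠ j → Commute (A i) (B j))
    {i j : Fin N} (hij : i ≠ j) (k m : ℤ) :
    Commute (obs A B i k) (obs A B j m) := by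
  unfold obs
  split_ifs
  all_goals first
    | exact hAA i j hij
    | exact hAB i j hij
    | exact (hAB j i hij.symm).symm
    | exact hBB i j hij
    | exact Commute.one_left _
    | exact Commute.one_right _

lemma aux_mem_filter_ne {T i : Fin N}
    (h : i ∈ (List.finRange N).filter (fun i => i ≠ T)) : i ≠ T := by
  simpa using (List.mem_filter.mp h).2

section Main

variable (A B : Fin N → H →ₗ[ℂ] H)

lemma aux_pairwise_commute
    (hAA : ∀ i j, i ≠ j → Commute (A i) (A j))
    (hBB : ∀ i j, i ≠ j → Commute (B i) (B j))
    (hAB : ∀ i j, i ≠ j → Commute (A i) (B j))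
    (s : Fin N → ℤ) (T : Fin N) :
    (((List.finRange N).filter (fun i => i ≠ T)).map
      (fun i => obs A B i (s i))).Pairwise Commute := by
  have hnd : ((List.finRange N).filter (fun i => i ≠ T)).Pairwise (· ≠ ·) :=
    List.Nodup.filter _ (List.nodup_finRange N)
  exact List.Pairwise.map _ (fun a b hab => aux_obs_commute A B hAA hBB hAB hab _ _) hnd

lemma aux_prodExcept_symm
    (hAsa : ∀ i, (A i).IsSymmetric) (hBsa : ∀ i, (B i).IsSymmetric)
    (hAA : ∀ i j, i ≠ j → Commute (A i) (A j))
    (hBB : ∀ i j, i ≠ j → Commute (B i) (B j))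
    (hAB : ∀ i j, i ≠ j → Commute (A i) (B j))
    (s : Fin N → ℤ) (T : Fin N) :
    (prodExcept T (fun i => obs A B i (s i))).IsSymmetric := by
  apply aux_list_prod_symm
  · intro x hx
    obtain ⟨i, -, rfl⟩ := List.mem_map.mp hx
    exact aux_obs_symm A B hAsa hBsa i _
  · exact aux_pairwise_commute A B hAA hBB hAB s T

lemma aux_prodExcept_sq
    (hA2 : ∀ i, A i * A i = 1) (hB2 : ∀ i, B i * B i = 1)
    (hAA : ∀ i j, i ≠ j → Commute (A i) (A j))
    (hBB : ∀ i j, i ≠ j → Commute (B i) (B j))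
    (hAB : ∀ i j, i ≠ j → Commute (A i) (B j))
    (s : Fin N → ℤ) (T : Fin N) :
    prodExcept T (fun i => obs A B i (s i)) * prodExcept T (fun i => obs A B i (s i)) = 1 := by
  apply aux_list_prod_sq
  · intro x hx
    obtain ⟨i, -, rfl⟩ := List.mem_map.mp hx
    exact aux_obs_sq A B hA2 hB2 i _
  · exact aux_pairwise_commute A B hAA hBB hAB s T

lemma aux_A_commute_prodExcept
    (hAA : ∀ i j, i ≠ j → Commute (A i) (A j))
    (hAB : ∀ i j, i ≠ j → Commute (A i) (B j))
    (s : Fin N → ℤ) (T : Fin N) :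
    Commute (A T) (prodExcept T (fun i => obs A B i (s i))) := by
  apply Commute.list_prod_right
  intro x hx
  obtain ⟨i, hi, rfl⟩ := List.mem_map.mp hx
  have hiT : T ≠ i := (aux_mem_filter_ne hi).symm
  unfold obs; split_ifs
  · exact hAA T i hiT
  · exact hAB T i hiT
  · exact Commute.one_right _

lemma aux_B_commute_prodExcept
    (hBB : ∀ i j, i ≠ j → Commute (B i) (B j))
    (hAB : ∀ i j, i ≠ j → Commute (A i) (B j))
    (s : Fin N → ℤ) (T : Fin N) :
    Commute (B T) (prodExcept T (fun i => obs A B i (s i))) := by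
  apply Commute.list_prod_right
  intro x hx
  obtain ⟨i, hi, rfl⟩ := List.mem_map.mp hx
  have hiT : i ≠ T := aux_mem_filter_ne hi
  unfold obs; split_ifs
  · exact (hAB i T hiT).symm
  · exact hBB T i hiT.symm
  · exact Commute.one_right _

end Main

lemma aux_sq_of_mul (R Q : H →ₗ[ℂ] H) (hc : Commute R Q) (hQ : Q * Q = 1) :
    (R * Q) * (R * Q) = R * R := by
  rw [mul_assoc, ← mul_assoc Q R Q, ← hc.eq, mul_assoc, hQ, mul_one]

lemma aux_sq_sum (a b : H →ₗ[ℂ] H) (ha : a * a = 1) (hb : b * b = 1) :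
    (a + b) * (a + b) + (a - b) * (a - b) = (4 : ℂ) • (1 : H →ₗ[ℂ] H) := by
  have h : (a + b) * (a + b) + (a - b) * (a - b) = a * a + a * a + (b * b + b * b) := by
    noncomm_ring
  rw [h, ha, hb]
  ext v
  simp only [LinearMap.add_apply, Module.End.one_apply, LinearMap.smul_apply]
  module

lemma aux_core (P1 P2 : H →ₗ[ℂ] H) (h1 : P1.IsSymmetric) (h2 : P2.IsSymmetric)
    (hsq : P1 * P1 + P2 * P2 = (4 : ℂ) • (1 : H →ₗ[ℂ] H))
    (ψ : H) (hψ : ‖ψ‖ = 1)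
    (hsat : ⟪ψ, (P1 + P2) ψ⟫_ℂ = ((2 * Real.sqrt 2 : ℝ) : ℂ)) :
    ((((Real.sqrt 2 : ℝ) : ℂ)⁻¹ • P1) ψ = ψ) ∧ (((( Real.sqrt 2 : ℝ) : ℂ)⁻¹ • P2) ψ = ψ) := by
  have hs2 : Real.sqrt 2 * Real.sqrt 2 = 2 := Real.mul_self_sqrt (by norm_num)
  have hsatsum : ⟪ψ, P1 ψ⟫_ℂ + ⟪ψ, P2 ψ⟫_ℂ = ((2 * Real.sqrt 2 : ℝ) : ℂ) := by
    rw [← inner_add_right, ← LinearMap.add_apply]; exact hsat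
  have hre : (⟪ψ, P1 ψ⟫_ℂ).re + (⟪ψ, P2 ψ⟫_ℂ).re = 2 * Real.sqrt 2 := by
    have := congrArg Complex.re hsatsum
    simpa [Complex.add_re] using this
  have hnorm : ‖P1 ψ‖ ^ 2 + ‖P2 ψ‖ ^ 2 = 4 := by
    have e1 : ‖P1 ψ‖ ^ 2 = (⟪ψ, P1 (P1 ψ)⟫_ℂ).re := by
      rw [← h1 ψ (P1 ψ)]
      exact (inner_self_eq_norm_sq (𝕜 := ℂ) (P1 ψ)).symm
    have e2 : ‖P2 ψ‖ ^ 2 = (⟪ψ, P2 (P2 ψ)⟫_ℂ).re := by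
      rw [← h2 ψ (P2 ψ)]
      exact (inner_self_eq_norm_sq (𝕜 := ℂ) (P2 ψ)).symm
    have e3 : ⟪ψ, P1 (P1 ψ)⟫_ℂ + ⟪ψ, P2 (P2 ψ)⟫_ℂ = (4 : ℂ) := by
      rw [← inner_add_right]
      have : P1 (P1 ψ) + P2 (P2 ψ) = ((4 : ℂ) • (1 : H →ₗ[ℂ] H)) ψ := by
        rw [← hsq]; simp [Module.End.mul_apply]
      rw [this]
      simp only [LinearMap.smul_apply, Module.End.one_apply, inner_smul_right]
      rw [inner_self_eq_norm_sq_to_K, hψ]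
      norm_num
    have := congrArg Complex.re e3
    rw [Complex.add_re] at this
    rw [e1, e2, this]
    norm_num
  set c : ℂ := ((Real.sqrt 2 : ℝ) : ℂ) with hc
  have hcnorm : ‖c • ψ‖ ^ 2 = 2 := by
    rw [norm_smul, hψ, mul_one, hc, Complex.norm_real, Real.norm_eq_abs,
      abs_of_nonneg (Real.sqrt_nonneg 2), sq, hs2]
  have hres : ∀ P : H →ₗ[ℂ] H,
      Complex.re ⟪P ψ, c • ψ⟫_ℂ = Real.sqrt 2 * (⟪ψ, P ψ⟫_ℂ).re := by
    intro P
    rw [inner_smul_right, hc]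
    rw [show ((Real.sqrt 2 : ℝ) : ℂ) * ⟪P ψ, ψ⟫_ℂ = ((Real.sqrt 2 : ℝ) : ℂ) * ⟪P ψ, ψ⟫_ℂ from rfl]
    rw [Complex.re_ofReal_mul]
    congr 1
    exact inner_re_symm (𝕜 := ℂ) (P ψ) ψ
  have hz : ‖P1 ψ - c • ψ‖ ^ 2 + ‖P2 ψ - c • ψ‖ ^ 2 = 0 := by
    rw [norm_sub_sq (𝕜 := ℂ), norm_sub_sq (𝕜 := ℂ), hcnorm]
    simp only [RCLike.re_to_complex]
    rw [hres P1, hres P2]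
    have h4 : Real.sqrt 2 * (⟪ψ, P1 ψ⟫_ℂ).re + Real.sqrt 2 * (⟪ψ, P2 ψ⟫_ℂ).re = 4 := by
      have h5 : Real.sqrt 2 * ((⟪ψ, P1 ψ⟫_ℂ).re + (⟪ψ, P2 ψ⟫_ℂ).re)
          = Real.sqrt 2 * (2 * Real.sqrt 2) := by rw [hre]
      nlinarith [hs2, h5]
    linarith [hnorm, h4]
  have hz1 : P1 ψ - c • ψ = 0 := by
    have h1' : ‖P1 ψ - c • ψ‖ ^ 2 = 0 := by
      nlinarith [sq_nonneg ‖P1 ψ - c • ψ‖, sq_nonneg ‖P2 ψ - c • ψ‖]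
    have := pow_eq_zero_iff (n := 2) (by norm_num) |>.mp h1'
    exact norm_eq_zero.mp this
  have hz2 : P2 ψ - c • ψ = 0 := by
    have h2' : ‖P2 ψ - c • ψ‖ ^ 2 = 0 := by
      nlinarith [sq_nonneg ‖P1 ψ - c • ψ‖, sq_nonneg ‖P2 ψ - c • ψ‖]
    have := pow_eq_zero_iff (n := 2) (by norm_num) |>.mp h2'
    exact norm_eq_zero.mp this
  have hc0 : c ≠ 0 := by
    rw [hc]
    simp only [ne_eq, Complex.ofReal_eq_zero]
    positivity
  have e1 : P1 ψ = c • ψ := sub_eq_zero.mp hz1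
  have e2 : P2 ψ = c • ψ := sub_eq_zero.mp hz2
  constructor
  · rw [LinearMap.smul_apply, e1, smul_smul, inv_mul_cancel₀ hc0, one_smul]
  · rw [LinearMap.smul_apply, e2, smul_smul, inv_mul_cancel₀ hc0, one_smul]

theorem pair_bell_saturation [FiniteDimensional ℂ H]
    (A B : Fin N → H →ₗ[ℂ] H)
    (hAsa : ∀ i, (A i).IsSymmetric) (hBsa : ∀ i, (B i).IsSymmetric)
    (hA2 : ∀ i, A i * A i = 1) (hB2 : ∀ i, B i * B i = 1)
    (hAA : ∀ i j, i ≠ j → Commute (A i) (A j))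
    (hBB : ∀ i j, i ≠ j → Commute (B i) (B j))
    (hAB : ∀ i j, i ≠ j → Commute (A i) (B j))
    (s1 s2 : Fin N → ℤ)
    (hs1 : ∀ i, s1 i = -1 ∨ s1 i = 0 ∨ s1 i = 1)
    (hs2 : ∀ i, s2 i = -1 ∨ s2 i = 0 ∨ s2 i = 1)
    (T : Fin N) (hpair : s1 T * s2 T = -1)
    (ψ : H) (hψ : ‖ψ‖ = 1)
    (hsat : ⟪ψ, (pairBell A B s1 s2 T) ψ⟫_ℂ = ((2 * Real.sqrt 2 : ℝ) : ℂ)) :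
    (((Real.sqrt 2 : ℝ) : ℂ)⁻¹ •
        ((A T + s1 T • B T) * prodExcept T (fun i => obs A B i (s1 i)))) ψ = ψ ∧
    (((Real.sqrt 2 : ℝ) : ℂ)⁻¹ •
        ((A T + s2 T • B T) * prodExcept T (fun i => obs A B i (s2 i)))) ψ = ψ := by
  set Q1 := prodExcept T (fun i => obs A B i (s1 i)) with hQ1def
  set Q2 := prodExcept T (fun i => obs A B i (s2 i)) with hQ2def
  have hQ1sym : Q1.IsSymmetric := aux_prodExcept_symm A B hAsa hBsa hAA hBB hAB s1 T
  have hQ2sym : Q2.IsSymmetric := aux_prodExcept_symm A B hAsa hBsa hAA hBB hAB s2 T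
  have hQ1sq : Q1 * Q1 = 1 := aux_prodExcept_sq A B hA2 hB2 hAA hBB hAB s1 T
  have hQ2sq : Q2 * Q2 = 1 := aux_prodExcept_sq A B hA2 hB2 hAA hBB hAB s2 T
  have hAQ1 : Commute (A T) Q1 := aux_A_commute_prodExcept A B hAA hAB s1 T
  have hAQ2 : Commute (A T) Q2 := aux_A_commute_prodExcept A B hAA hAB s2 T
  have hBQ1 : Commute (B T) Q1 := aux_B_commute_prodExcept A B hBB hAB s1 T
  have hBQ2 : Commute (B T) Q2 := aux_B_commute_prodExcept A B hBB hAB s2 T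
  have hsatsum : ⟪ψ, ((A T + s1 T • B T) * Q1 + (A T + s2 T • B T) * Q2) ψ⟫_ℂ
      = ((2 * Real.sqrt 2 : ℝ) : ℂ) := hsat
  obtain ⟨h1T, h2T⟩ | ⟨h1T, h2T⟩ : (s1 T = 1 ∧ s2 T = -1) ∨ (s1 T = -1 ∧ s2 T = 1) := by
    rcases hs1 T with h | h | h <;> rcases hs2 T with h' | h' | h' <;>
      rw [h, h'] at hpair <;>
      first
        | exact Or.inl ⟨h, h'⟩
        | exact Or.inr ⟨h, h'⟩
        | norm_num at hpair
  · -- s1 T = 1, s2 T = -1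
    have hR1 : A T + s1 T • B T = A T + B T := by rw [h1T, one_smul]
    have hR2 : A T + s2 T • B T = A T - B T := by
      rw [h2T, neg_one_zsmul, ← sub_eq_add_neg]
    rw [hR1, hR2] at hsatsum ⊢
    have hR1sym : (A T + B T).IsSymmetric := (hAsa T).add (hBsa T)
    have hR2sym : (A T - B T).IsSymmetric := by
      rw [sub_eq_add_neg]; exact (hAsa T).add (aux_neg_symm (hBsa T))
    have hR1c : Commute (A T + B T) Q1 := hAQ1.add_left hBQ1
    have hR2c : Commute (A T - B T) Q2 := hAQ2.sub_left hBQ2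
    have hsq : ((A T + B T) * Q1) * ((A T + B T) * Q1)
        + ((A T - B T) * Q2) * ((A T - B T) * Q2) = (4 : ℂ) • (1 : H →ₗ[ℂ] H) := by
      rw [aux_sq_of_mul _ _ hR1c hQ1sq, aux_sq_of_mul _ _ hR2c hQ2sq]
      exact aux_sq_sum (A T) (B T) (hA2 T) (hB2 T)
    exact aux_core _ _ (aux_mul_symm hR1sym hQ1sym hR1c) (aux_mul_symm hR2sym hQ2sym hR2c)
      hsq ψ hψ hsatsum
  · -- s1 T = -1, s2 T = 1
    have hR1 : A T + s1 T • B T = A T - B T := by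
      rw [h1T, neg_one_zsmul, ← sub_eq_add_neg]
    have hR2 : A T + s2 T • B T = A T + B T := by rw [h2T, one_smul]
    rw [hR1, hR2] at hsatsum ⊢
    have hR1sym : (A T - B T).IsSymmetric := by
      rw [sub_eq_add_neg]; exact (hAsa T).add (aux_neg_symm (hBsa T))
    have hR2sym : (A T + B T).IsSymmetric := (hAsa T).add (hBsa T)
    have hR1c : Commute (A T - B T) Q1 := hAQ1.sub_left hBQ1
    have hR2c : Commute (A T + B T) Q2 := hAQ2.add_left hBQ2
    have hsq : ((A T - B T) * Q1) * ((A T - B T) * Q1)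
        + ((A T + B T) * Q2) * ((A T + B T) * Q2) = (4 : ℂ) • (1 : H →ₗ[ℂ] H) := by
      rw [aux_sq_of_mul _ _ hR1c hQ1sq, aux_sq_of_mul _ _ hR2c hQ2sq]
      rw [add_comm]
      exact aux_sq_sum (A T) (B T) (hA2 T) (hB2 T)
    exact aux_core _ _ (aux_mul_symm hR1sym hQ1sym hR1c) (aux_mul_symm hR2sym hQ2sym hR2c)
      hsq ψ hψ hsatsum

end
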